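/- Let H be an invertible 2×2 real matrix and α ∈ ℝ such that α² det(H) − α tr(H) + 1 = 0. Then for every ϑ ∈ ℝ², the vectors (I − αH)ϑ and H⁻¹ϑ − αϑ are parallel, i.e., linearly dependent over ℝ (equivalently, the 2×2 determinant of the matrix with these two columns vanishes). -/

import Mathlib

open Matrix

/-- The parallelism claim (g2pal2): if `α² det(H) − α tr(H) + 1 = 0`, then for
every `ϑ ∈ ℝ²` the vectors `(I − αH)ϑ` and `H⁻¹ϑ − αϑ` are linearly dependent,
i.e. the determinant of the 2×2 matrix with these columns vanishes. -/
theorem parallelism {H : Matrix (Fin 2) (Fin 2) ℝ} (hH : H.det ≠ 0)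
    (α : ℝ) (hα : α ^ 2 * H.det - α * H.trace + 1 = 0)
    (ϑ : Fin 2 → ℝ) :
    (ϑ - α • (H *ᵥ ϑ)) 0 * (H⁻¹ *ᵥ ϑ - α • ϑ) 1 -
      (ϑ - α • (H *ᵥ ϑ)) 1 * (H⁻¹ *ᵥ ϑ - α • ϑ) 0 = 0 := by
  have hinv : H⁻¹ = H.det⁻¹ • H.adjugate := by rw [Matrix.inv_def, Ring.inverse_eq_inv]
  rw [hinv]
  simp only [Matrix.adjugate_fin_two, Matrix.smul_mulVec, Matrix.mulVec,
    dotProduct, Fin.sum_univ_two, Pi.sub_apply, Pi.smul_apply,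
    smul_eq_mul, Matrix.cons_val', Matrix.cons_val_zero, Matrix.cons_val_one,
    Matrix.head_cons, Matrix.head_fin_const, Matrix.empty_val',
    Matrix.cons_val_fin_one, Matrix.of_apply]
  rw [Matrix.det_fin_two] at hH ⊢
  rw [Matrix.det_fin_two, Matrix.trace_fin_two] at hα
  field_simp
  linear_combination (-(H 1 0) * ϑ 0 ^ 2 + (H 0 0 - H 1 1) * ϑ 0 * ϑ 1 +
    H 0 1 * ϑ 1 ^ 2) * hα
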